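/- Let k be a natural number and let h : {0,1}^k → ℝ be any contingency table. Then for every j ∈ {0,1}^k, the marginal table of h on j lies in the span of the projected Fourier basis vectors indexed by γ ⪯ j; precisely, C^j h = Σ_{γ ⪯ j} ⟨f^γ, h⟩ · (C^j f^γ). -/

import Mathlib

open Finset

/-- `⟨γ,j⟩ = Σ_i γ_i j_i` on the Boolean hypercube `{0,1}^k`. -/
def cubeInner {k : ℕ} (γ j : Fin k → Bool) : ℕ :=
  (Finset.univ.filter fun i => γ i = true ∧ j i = true).card

/-- The Fourier basis vector `f^j`, with `f^j_γ = (−1)^{⟨γ,j⟩}·2^{−k/2}`. -/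
noncomputable def cubeFourier {k : ℕ} (j γ : Fin k → Bool) : ℝ :=
  (-1 : ℝ) ^ cubeInner γ j * (2 : ℝ) ^ (-(k : ℝ) / 2)

/-- The inner product of two tables, `⟨f,h⟩ = Σ_η f_η h_η`. -/
noncomputable def tdot {k : ℕ} (f h : (Fin k → Bool) → ℝ) : ℝ := ∑ η, f η * h η

/-- Coordinatewise product (meet) `η ∧ j` on `{0,1}^k`. -/
def meet {k : ℕ} (η j : Fin k → Bool) : Fin k → Bool := fun i => η i && j i

/-- The marginalisation operator: `(C^j h)_γ = Σ_{η : η ∧ j = γ} h_η`. -/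
noncomputable def proj {k : ℕ} (j : Fin k → Bool) (h : (Fin k → Bool) → ℝ)
    (γ : Fin k → Bool) : ℝ :=
  ∑ η ∈ Finset.univ.filter (fun η => meet η j = γ), h η

/-- `γ ⪯ j` iff `γ_i ≤ j_i` for all `i`. -/
def cubeLe {k : ℕ} (γ j : Fin k → Bool) : Prop := ∀ i, γ i ≤ j i

instance {k : ℕ} (j : Fin k → Bool) : DecidablePred (fun γ => cubeLe γ j) :=
  fun γ => inferInstanceAs (Decidable (∀ i, γ i ≤ j i))

lemma sign_eq_prod {k : ℕ} (η γ' : Fin k → Bool) :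
    ((-1:ℝ) ^ cubeInner η γ') = ∏ i, (if η i && γ' i then (-1:ℝ) else 1) := by
  rw [cubeInner, ← Finset.prod_const, Finset.prod_filter]
  exact Finset.prod_congr rfl fun i _ => by cases η i <;> cases γ' i <;> simp

lemma cube_sign_mul {k : ℕ} (η μ γ' : Fin k → Bool) :
    ((-1:ℝ) ^ cubeInner η γ') * ((-1:ℝ) ^ cubeInner μ γ') =
      (-1:ℝ) ^ cubeInner (fun i => xor (η i) (μ i)) γ' := by
  rw [sign_eq_prod, sign_eq_prod, sign_eq_prod, ← Finset.prod_mul_distrib]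
  exact Finset.prod_congr rfl fun i _ => by cases η i <;> cases μ i <;> cases γ' i <;> simp

lemma filter_le_eq {k : ℕ} (j : Fin k → Bool) :
    Finset.univ.filter (fun γ' : Fin k → Bool => cubeLe γ' j) =
      Fintype.piFinset (fun i => if j i then (Finset.univ : Finset Bool) else {false}) := by
  ext γ'
  simp only [Finset.mem_filter, Finset.mem_univ, true_and, Fintype.mem_piFinset, cubeLe]
  refine (Finset.mem_filter_univ _).trans (forall_congr' fun i => ?_)
  cases hj : j i <;> cases hg : γ' i <;> simp [hj, hg]

lemma orthogonality {k : ℕ} (j ν : Fin k → Bool) :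
    ∑ γ' ∈ Finset.univ.filter (fun γ' => cubeLe γ' j), (-1:ℝ) ^ cubeInner ν γ' =
      if (∀ i, (ν i && j i) = false) then
        (2:ℝ) ^ ((Finset.univ.filter fun i => j i = true).card) else 0 := by
  rw [filter_le_eq]
  calc ∑ γ' ∈ Fintype.piFinset (fun i => if j i then (Finset.univ : Finset Bool) else {false}),
        (-1:ℝ) ^ cubeInner ν γ'
      = ∑ γ' ∈ Fintype.piFinset (fun i => if j i then (Finset.univ : Finset Bool) else {false}),
        ∏ i, (if ν i && γ' i then (-1:ℝ) else 1) :=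
        Finset.sum_congr rfl fun γ' _ => sign_eq_prod ν γ'
    _ = ∏ i, ∑ b ∈ (if j i then (Finset.univ : Finset Bool) else {false}),
          (if ν i && b then (-1:ℝ) else 1) :=
        (Finset.prod_univ_sum (fun i => if j i then (Finset.univ : Finset Bool) else {false})
          (fun i b => if ν i && b then (-1:ℝ) else 1)).symm
    _ = ∏ i, (if j i then (if ν i then (0:ℝ) else 2) else 1) := by
        refine Finset.prod_congr rfl fun i _ => ?_
        cases hj : j i <;> cases hv : ν i <;>
          simp [hj, hv, Fintype.sum_bool]
    _ = _ := by
        by_cases hall : ∀ i, (ν i && j i) = false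
        · rw [if_pos hall]
          have : ∀ i, (if j i then (if ν i then (0:ℝ) else 2) else 1)
              = (if j i = true then (2:ℝ) else 1) := by
            intro i
            have := hall i
            cases hj : j i <;> cases hv : ν i <;> simp_all
          rw [Finset.prod_congr rfl fun i _ => this i, ← Finset.prod_filter,
            Finset.prod_const]
        · rw [if_neg hall]
          push_neg at hall
          obtain ⟨i, hi⟩ := hall
          have hji : j i = true := by revert hi; cases j i <;> simp
          have hvi : ν i = true := by revert hi; cases ν i <;> simp
          exact Finset.prod_eq_zero (Finset.mem_univ i) (by simp [hji, hvi])

lemma fiber_eq {k : ℕ} (j γ : Fin k → Bool) (hγ : cubeLe γ j) :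
    (Finset.univ.filter fun μ : Fin k → Bool => meet μ j = γ) =
      Fintype.piFinset (fun i => if j i then ({γ i} : Finset Bool) else Finset.univ) := by
  ext μ
  simp only [Finset.mem_filter, Finset.mem_univ, true_and, Fintype.mem_piFinset, meet,
    funext_iff]
  refine forall_congr' fun i => ?_
  have := hγ i
  cases hj : j i
  · simp only [hj] at this ⊢
    have : γ i = false := by revert this; cases γ i <;> simp
    simp [this]
  · simp [hj]

/-- For any contingency table `h : {0,1}^k → ℝ` and any `j ∈ {0,1}^k`, the marginal
table of `h` on `j` satisfies `C^j h = Σ_{γ ⪯ j} ⟨f^γ, h⟩ · (C^j f^γ)`. -/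
theorem stmt_7 (k : ℕ) (h : (Fin k → Bool) → ℝ) (j : Fin k → Bool)
    (γ : Fin k → Bool) (hγ : cubeLe γ j) :
    proj j h γ =
      ∑ γ' ∈ Finset.univ.filter (fun γ' => cubeLe γ' j),
        tdot (cubeFourier γ') h * proj j (cubeFourier γ') γ := by
  classical
  set S := Finset.univ.filter (fun γ' : Fin k → Bool => cubeLe γ' j) with hS
  set F := Finset.univ.filter (fun μ : Fin k → Bool => meet μ j = γ) with hF
  set m := (Finset.univ.filter fun i : Fin k => j i = true).card with hm
  -- rewrite RHS as triple sum and swap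
  have step1 : ∑ γ' ∈ S, tdot (cubeFourier γ') h * proj j (cubeFourier γ') γ
      = ∑ η : Fin k → Bool, ∑ μ ∈ F, h η *
          (∑ γ' ∈ S, cubeFourier γ' η * cubeFourier γ' μ) := by
    simp only [tdot, proj, Finset.sum_mul, Finset.mul_sum]
    exact Finset.sum_comm.trans ((Finset.sum_congr rfl fun μ _ => Finset.sum_comm).trans
      (Finset.sum_comm.trans (Finset.sum_congr rfl fun η _ =>
        Finset.sum_congr rfl fun μ _ =>
          Finset.sum_congr rfl fun γ' _ => by ring)))
  -- orthogonality evaluation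
  have hpow : ((2:ℝ) ^ (-(k:ℝ)/2)) * ((2:ℝ) ^ (-(k:ℝ)/2)) = (2:ℝ) ^ (-(k:ℝ)) := by
    rw [← Real.rpow_add (by norm_num)]; ring_nf
  have step2 : ∀ η μ : Fin k → Bool,
      (∑ γ' ∈ S, cubeFourier γ' η * cubeFourier γ' μ)
        = (if meet η j = meet μ j then (2:ℝ) ^ (-(k:ℝ)) * (2:ℝ) ^ m else 0) := by
    intro η μ
    have : ∀ γ' : Fin k → Bool, cubeFourier γ' η * cubeFourier γ' μ
        = ((-1:ℝ) ^ cubeInner (fun i => xor (η i) (μ i)) γ') * (2:ℝ) ^ (-(k:ℝ)) := by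
      intro γ'
      rw [cubeFourier, cubeFourier, ← hpow, ← cube_sign_mul]
      ring
    rw [Finset.sum_congr rfl fun γ' _ => this γ', ← Finset.sum_mul, hS, orthogonality]
    have hcond : (∀ i, ((xor (η i) (μ i)) && j i) = false) ↔ meet η j = meet μ j := by
      simp only [meet, funext_iff]
      refine forall_congr' fun i => ?_
      cases η i <;> cases μ i <;> cases j i <;> simp
    rw [← hm]
    by_cases hc : meet η j = meet μ j
    · rw [if_pos (hcond.mpr hc), if_pos hc]; ring
    · rw [if_neg (fun hh => hc (hcond.mp hh)), if_neg hc, zero_mul]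
  -- cardinality of the fiber
  have hcard : (F.card : ℝ) = (2:ℝ) ^ (k - m) ∧ m ≤ k := by
    constructor
    · rw [hF, fiber_eq j γ hγ, Fintype.card_piFinset]
      have : ∀ i : Fin k, ((if j i then ({γ i} : Finset Bool) else Finset.univ).card)
          = if j i = true then 1 else 2 := by
        intro i; cases hj : j i <;> simp [hj]
      rw [Finset.prod_congr rfl fun i _ => this i, Finset.prod_ite, Finset.prod_const,
        Finset.prod_const]
      have hsplit : (Finset.univ.filter fun i : Fin k => ¬ j i = true).card = k - m := by
        have := Finset.card_filter_add_card_filter_not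
          (s := (Finset.univ : Finset (Fin k))) (p := fun i => j i = true)
        simp only [Finset.card_univ, Fintype.card_fin] at this
        omega
      rw [hsplit]
      push_cast [one_pow]
      ring
    · calc m ≤ (Finset.univ : Finset (Fin k)).card := Finset.card_filter_le _ _
        _ = k := by simp
  obtain ⟨hcard, hmk⟩ := hcard
  -- assemble
  rw [step1]
  have step3 : ∀ η : Fin k → Bool, ∑ μ ∈ F, h η *
      (∑ γ' ∈ S, cubeFourier γ' η * cubeFourier γ' μ)
      = if meet η j = γ then h η else 0 := by
    intro η
    have : ∀ μ ∈ F, h η * (∑ γ' ∈ S, cubeFourier γ' η * cubeFourier γ' μ)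
        = h η * (if meet η j = γ then (2:ℝ) ^ (-(k:ℝ)) * (2:ℝ) ^ m else 0) := by
      intro μ hμ
      rw [step2]
      have hμγ : meet μ j = γ := by
        rw [hF] at hμ; exact (Finset.mem_filter.mp hμ).2
      rw [hμγ]
    rw [Finset.sum_congr rfl this, Finset.sum_const, nsmul_eq_mul]
    by_cases hc : meet η j = γ
    · rw [if_pos hc, if_pos hc, hcard]
      have : (2:ℝ) ^ (k - m) * (h η * ((2:ℝ) ^ (-(k:ℝ)) * (2:ℝ) ^ m))
          = h η * ((2:ℝ) ^ (-(k:ℝ)) * ((2:ℝ) ^ (k - m) * (2:ℝ) ^ m)) := by ring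
      rw [this, ← pow_add]
      have hkm : k - m + m = k := by omega
      rw [hkm]
      have : (2:ℝ) ^ (-(k:ℝ)) * (2:ℝ) ^ k = 1 := by
        rw [← Real.rpow_natCast 2 k, ← Real.rpow_add (by norm_num)]
        norm_num
      rw [this, mul_one]
    · rw [if_neg hc, if_neg hc, mul_zero, mul_zero]
  rw [Finset.sum_congr rfl fun η _ => step3 η]
  simp only [proj]
  rw [Finset.sum_filter]
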